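/- Let G be a finite simple graph with edge set E(G). Then the harmonic index of the total graph of G satisfies H(T(G)) = (1/2)·H(G) + ∑ 2/(deg(u) + 2·deg(v) + deg(w)) + 8·∑_{uv ∈ E(G)} (deg(u) + deg(v)) / (3·(deg(u) + deg(v))² + 4·deg(u)·deg(v)), where the middle sum ranges over all unordered pairs of distinct edges uv, vw of G sharing a common vertex v (i.e., with u ≠ w). -/

import Mathlib

open scoped Classical

/-- The total graph `T(G)` of a simple graph `G`: its vertex set is `V(G) ∪ E(G)`,
and two vertices of `T(G)` are adjacent iff the corresponding elements of `G`
are adjacent vertices, adjacent (distinct, sharing an endpoint) edges, or an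
incident vertex–edge pair. -/
def SimpleGraph.totalGraph {V : Type*} (G : SimpleGraph V) :
    SimpleGraph (V ⊕ G.edgeSet) where
  Adj x y :=
    match x, y with
    | Sum.inl u, Sum.inl v => G.Adj u v
    | Sum.inl u, Sum.inr e => u ∈ (e : Sym2 V)
    | Sum.inr e, Sum.inl u => u ∈ (e : Sym2 V)
    | Sum.inr e, Sum.inr f => e ≠ f ∧ ∃ v, v ∈ (e : Sym2 V) ∧ v ∈ (f : Sym2 V)
  symm := by
    constructor
    rintro (u | e) (v | f) h
    · exact h.symm
    · exact h
    · exact h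
    · exact ⟨h.1.symm, h.2.imp fun v hv => ⟨hv.2, hv.1⟩⟩
  loopless := by
    constructor
    rintro (u | e) h
    · exact G.loopless.irrefl u h
    · exact h.1 rfl

/-- The harmonic index `H(G) = ∑_{uv ∈ E(G)} 2 / (deg u + deg v)`. -/
noncomputable def SimpleGraph.harmonicIndex {V : Type*} [Fintype V] (G : SimpleGraph V) : ℝ :=
  ∑ e ∈ G.edgeFinset,
    Sym2.lift ⟨fun u v => 2 / ((G.degree u : ℝ) + (G.degree v : ℝ)),
      fun u v => by simp [add_comm]⟩ e

namespace TGAux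

open Finset

variable {α : Type*} [Fintype α]

/-- Sum over ordered adjacent pairs equals twice the sum over edges. -/
lemma sum_neighbors_eq_two_mul_edge_sum (G : SimpleGraph α)
    (f : α → α → ℝ) (hf : ∀ u v, f u v = f v u) :
    ∑ v : α, ∑ w ∈ G.neighborFinset v, f v w
      = 2 * ∑ e ∈ G.edgeFinset, Sym2.lift ⟨f, hf⟩ e := by
  classical
  have h1 : ∑ d : G.Dart, f d.fst d.snd
      = ∑ v : α, ∑ w ∈ G.neighborFinset v, f v w := by
    rw [← Finset.sum_fiberwise_of_maps_to (g := fun d : G.Dart => d.fst)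
      (t := (univ : Finset α)) (fun d _ => mem_univ _)]
    refine Finset.sum_congr rfl fun v _ => ?_
    have hfib : ({d : G.Dart | d.fst = v} : Finset _)
        = univ.image (G.dartOfNeighborSet v) := G.dart_fst_fiber v
    rw [show (univ.filter fun d : G.Dart => d.fst = v) = univ.image (G.dartOfNeighborSet v)
        from hfib]
    rw [Finset.sum_image (fun a _ b _ h => G.dartOfNeighborSet_injective v h)]
    rw [show G.neighborFinset v = (G.neighborSet v).toFinset from rfl,
      ← Finset.sum_set_coe]
    rfl
  have h2 : ∑ d : G.Dart, f d.fst d.snd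
      = 2 * ∑ e ∈ G.edgeFinset, Sym2.lift ⟨f, hf⟩ e := by
    have hlift : ∀ d : G.Dart, f d.fst d.snd = Sym2.lift ⟨f, hf⟩ d.edge := by
      intro d; rfl
    simp_rw [hlift]
    rw [← Finset.sum_fiberwise_of_maps_to (g := fun d : G.Dart => d.edge)
      (t := G.edgeFinset) (fun d _ => by simp [d.edge_mem])]
    rw [Finset.mul_sum]
    refine Finset.sum_congr rfl fun e he => ?_
    have hcard : #{d : G.Dart | d.edge = e} = 2 :=
      G.dart_edge_fiber_card e (by simpa using he)
    rw [Finset.sum_congr rfl (fun d hd => by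
      rw [(Finset.mem_filter.mp hd).2]), Finset.sum_const, hcard]
    simp [mul_comm]
  rw [← h1, h2]

/-- Swapping the roles of the two endpoints in a sum over ordered adjacent pairs. -/
lemma sum_neighbors_swap (G : SimpleGraph α) (f : α → α → ℝ) :
    ∑ v : α, ∑ w ∈ G.neighborFinset v, f v w
      = ∑ v : α, ∑ w ∈ G.neighborFinset v, f w v := by
  classical
  simp_rw [SimpleGraph.neighborFinset_eq_filter, Finset.sum_filter]
  rw [Finset.sum_comm]
  refine Finset.sum_congr rfl fun v _ => Finset.sum_congr rfl fun w _ => ?_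
  rw [G.adj_comm]

/-- Sum over edges containing a fixed vertex equals sum over its neighbors. -/
lemma sum_edges_through (G : SimpleGraph α) (u : α) (h : Sym2 α → ℝ) :
    ∑ e : G.edgeSet, (if u ∈ (e : Sym2 α) then h (e : Sym2 α) else 0)
      = ∑ v ∈ G.neighborFinset u, h s(u, v) := by
  classical
  rw [← Finset.sum_filter]
  refine (Finset.sum_bij (fun v hv => (⟨s(u, v),
      (G.mem_edgeSet).mpr ((SimpleGraph.mem_neighborFinset _ _ _).mp hv)⟩ : G.edgeSet))
    ?_ ?_ ?_ ?_).symm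
  · intro v hv
    simp [Finset.mem_filter]
  · intro v hv v' hv' hvv'
    have : s(u, v) = s(u, v') := congrArg Subtype.val hvv'
    exact Sym2.congr_right.mp this
  · rintro ⟨z, hz⟩ hmem
    have hu : u ∈ z := by simpa [Finset.mem_filter] using hmem
    refine ⟨Sym2.Mem.other hu, ?_, ?_⟩
    · rw [SimpleGraph.mem_neighborFinset, ← G.mem_edgeSet, Sym2.other_spec hu]
      exact hz
    · exact Subtype.ext (Sym2.other_spec hu)
  · intro v hv
    rfl

/-- Summing an indicator of membership in an edge `s(a,b)`. -/
lemma sum_mem_pair {a b : α} (hab : a ≠ b) (g : α → ℝ) :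
    ∑ v : α, (if v ∈ s(a, b) then g v else 0) = g a + g b := by
  classical
  rw [← Finset.sum_filter]
  have hf : (univ.filter (· ∈ s(a, b))) = {a, b} := by
    ext v; simp [Sym2.mem_iff]
  rw [hf, Finset.sum_pair hab]

/-- Two distinct edges share at most one vertex: the shared-vertex indicator
expands into a sum over vertices. -/
lemma ite_shared {V : Type*} [Fintype V] (G : SimpleGraph V)
    (e f : G.edgeSet) (c : ℝ) :
    (if e ≠ f ∧ ∃ v, v ∈ (e : Sym2 V) ∧ v ∈ (f : Sym2 V) then c else 0)
      = ∑ v : V, (if e ≠ f ∧ v ∈ (e : Sym2 V) ∧ v ∈ (f : Sym2 V) then c else 0) := by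
  by_cases h : e ≠ f ∧ ∃ v, v ∈ (e : Sym2 V) ∧ v ∈ (f : Sym2 V)
  · obtain ⟨hne, v0, hv0e, hv0f⟩ := h
    rw [if_pos ⟨hne, v0, hv0e, hv0f⟩]
    rw [Finset.sum_eq_single_of_mem v0 (mem_univ v0) (fun v _ hv => by
      rw [if_neg]
      rintro ⟨-, hve, hvf⟩
      exact hne (Subtype.ext
        (((Sym2.mem_and_mem_iff hv).mp ⟨hve, hv0e⟩).trans
          ((Sym2.mem_and_mem_iff hv).mp ⟨hvf, hv0f⟩).symm)))]
    rw [if_pos ⟨hne, hv0e, hv0f⟩]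
  · rw [if_neg h, eq_comm]
    refine Finset.sum_eq_zero fun v _ => ?_
    rw [if_neg]
    rintro ⟨hne, hve, hvf⟩
    exact h ⟨hne, v, hve, hvf⟩

variable {V : Type*} [Fintype V] (G : SimpleGraph V)

@[simp] lemma totalGraph_adj_inl_inl (u v : V) :
    G.totalGraph.Adj (Sum.inl u) (Sum.inl v) ↔ G.Adj u v := Iff.rfl

@[simp] lemma totalGraph_adj_inl_inr (u : V) (e : G.edgeSet) :
    G.totalGraph.Adj (Sum.inl u) (Sum.inr e) ↔ u ∈ (e : Sym2 V) := Iff.rfl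

@[simp] lemma totalGraph_adj_inr_inl (u : V) (e : G.edgeSet) :
    G.totalGraph.Adj (Sum.inr e) (Sum.inl u) ↔ u ∈ (e : Sym2 V) := Iff.rfl

@[simp] lemma totalGraph_adj_inr_inr (e f : G.edgeSet) :
    G.totalGraph.Adj (Sum.inr e) (Sum.inr f)
      ↔ e ≠ f ∧ ∃ v, v ∈ (e : Sym2 V) ∧ v ∈ (f : Sym2 V) := Iff.rfl

/-- The degree of any vertex, cast to `ℝ`, as a sum of indicators. -/
lemma degree_cast (G' : SimpleGraph α) (x : α) :
    (G'.degree x : ℝ) = ∑ y : α, if G'.Adj x y then (1 : ℝ) else 0 := by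
  classical
  rw [SimpleGraph.degree, SimpleGraph.neighborFinset_eq_filter, Finset.card_filter]
  push_cast [apply_ite (Nat.cast : ℕ → ℝ)]
  rfl

/-- Degree sum of the endpoints of an edge, as a function on `Sym2 V`. -/
noncomputable def edgeDeg : Sym2 V → ℝ :=
  Sym2.lift ⟨fun a b => (G.degree a : ℝ) + (G.degree b : ℝ), fun a b => add_comm _ _⟩

@[simp] lemma edgeDeg_mk (a b : V) :
    edgeDeg G s(a, b) = (G.degree a : ℝ) + (G.degree b : ℝ) := rfl

lemma degree_totalGraph_inl (u : V) :
    (G.totalGraph.degree (Sum.inl u) : ℝ) = 2 * (G.degree u : ℝ) := by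
  classical
  rw [degree_cast, Fintype.sum_sum_type]
  have h1 : ∑ v : V, (if G.totalGraph.Adj (Sum.inl u) (Sum.inl v) then (1 : ℝ) else 0)
      = (G.degree u : ℝ) := by
    simp_rw [totalGraph_adj_inl_inl]
    exact (degree_cast G u).symm
  have h2 : ∑ e : G.edgeSet,
      (if G.totalGraph.Adj (Sum.inl u) (Sum.inr e) then (1 : ℝ) else 0)
      = (G.degree u : ℝ) := by
    simp_rw [totalGraph_adj_inl_inr]
    rw [sum_edges_through G u (fun _ => (1 : ℝ)), Finset.sum_const, nsmul_eq_mul, mul_one]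
    rfl
  rw [h1, h2]; ring

lemma degree_totalGraph_inr (e : G.edgeSet) :
    (G.totalGraph.degree (Sum.inr e) : ℝ) = edgeDeg G (e : Sym2 V) := by
  classical
  obtain ⟨z, hz⟩ := e
  induction z using Sym2.ind with
  | _ a b =>
  have hadj : G.Adj a b := G.mem_edgeSet.mp hz
  have hab : a ≠ b := hadj.ne
  rw [degree_cast, Fintype.sum_sum_type]
  have h1 : ∑ v : V,
      (if G.totalGraph.Adj (Sum.inr ⟨s(a, b), hz⟩) (Sum.inl v) then (1 : ℝ) else 0)
      = 2 := by
    simp_rw [totalGraph_adj_inr_inl]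
    rw [sum_mem_pair hab (fun _ => (1 : ℝ))]
    norm_num
  have h2 : ∑ f : G.edgeSet,
      (if G.totalGraph.Adj (Sum.inr ⟨s(a, b), hz⟩) (Sum.inr f) then (1 : ℝ) else 0)
      = (G.degree a : ℝ) - 1 + ((G.degree b : ℝ) - 1) := by
    simp_rw [totalGraph_adj_inr_inr, ite_shared]
    rw [Finset.sum_comm]
    have key : ∀ v : V, ∑ f : G.edgeSet,
        (if (⟨s(a, b), hz⟩ : G.edgeSet) ≠ f ∧ v ∈ ((⟨s(a, b), hz⟩ : G.edgeSet) : Sym2 V)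
            ∧ v ∈ (f : Sym2 V) then (1 : ℝ) else 0)
        = if v ∈ s(a, b) then
            (∑ w ∈ G.neighborFinset v, if s(a, b) ≠ s(v, w) then (1 : ℝ) else 0) else 0 := by
      intro v
      by_cases hv : v ∈ s(a, b)
      · rw [if_pos hv, ← sum_edges_through G v (fun z => if s(a, b) ≠ z then (1 : ℝ) else 0)]
        refine Finset.sum_congr rfl fun f _ => ?_
        by_cases hvf : v ∈ (f : Sym2 V)
        · by_cases hef : s(a, b) ≠ (f : Sym2 V)
          · rw [if_pos ⟨fun hc => hef (congrArg Subtype.val hc), hv, hvf⟩,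
              if_pos hvf, if_pos hef]
          · push_neg at hef
            rw [if_neg, if_pos hvf, if_neg (fun h => h hef)]
            rintro ⟨hne, -, -⟩
            exact hne (Subtype.ext hef)
        · rw [if_neg (by rintro ⟨-, -, h⟩; exact hvf h), if_neg hvf]
      · rw [if_neg hv]
        refine Finset.sum_eq_zero fun f _ => ?_
        rw [if_neg]
        rintro ⟨-, hve, -⟩
        exact hv hve
    simp_rw [key]
    rw [sum_mem_pair hab]
    have ha : ∑ w ∈ G.neighborFinset a, (if s(a, b) ≠ s(a, w) then (1 : ℝ) else 0)
        = (G.degree a : ℝ) - 1 := by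
      have : ∀ w, (s(a, b) ≠ s(a, w)) ↔ ¬ (w = b) := by
        intro w
        rw [not_iff_not]
        constructor
        · intro h; exact (Sym2.congr_right.mp h.symm)
        · rintro rfl; rfl
      simp_rw [this, ite_not]
      have h01 : ∀ w : V, (if w = b then (0 : ℝ) else 1)
          = 1 - (if w = b then (1 : ℝ) else 0) := by
        intro w; split_ifs <;> ring
      simp_rw [h01]
      rw [Finset.sum_sub_distrib, Finset.sum_const,
        Finset.sum_ite_eq' (G.neighborFinset a) b (fun _ => (1 : ℝ)),
        if_pos ((G.mem_neighborFinset a b).mpr hadj), nsmul_eq_mul, mul_one]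
      rfl
    have hb : ∑ w ∈ G.neighborFinset b, (if s(a, b) ≠ s(b, w) then (1 : ℝ) else 0)
        = (G.degree b : ℝ) - 1 := by
      have hiff : ∀ w, (s(a, b) ≠ s(b, w)) ↔ ¬ (w = a) := by
        intro w
        rw [not_iff_not]
        constructor
        · intro h
          have : s(b, a) = s(b, w) := by rw [Sym2.eq_swap]; exact h
          exact (Sym2.congr_right.mp this).symm
        · rintro rfl; rw [Sym2.eq_swap]
      simp_rw [hiff, ite_not]
      have h01 : ∀ w : V, (if w = a then (0 : ℝ) else 1)
          = 1 - (if w = a then (1 : ℝ) else 0) := by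
        intro w; split_ifs <;> ring
      simp_rw [h01]
      rw [Finset.sum_sub_distrib, Finset.sum_const,
        Finset.sum_ite_eq' (G.neighborFinset b) a (fun _ => (1 : ℝ)),
        if_pos ((G.mem_neighborFinset b a).mpr hadj.symm), nsmul_eq_mul, mul_one]
      rfl
    rw [ha, hb]
  rw [h1, h2]
  show _ = (G.degree a : ℝ) + (G.degree b : ℝ)
  ring

end TGAux

/-- For a finite simple graph `G`,
`H(T(G)) = (1/2)·H(G) + ∑ 2/(d(u) + 2d(v) + d(w))
  + 8·∑_{uv ∈ E(G)} (d(u)+d(v)) / (3(d(u)+d(v))² + 4 d(u) d(v))`,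
where the middle sum ranges over all unordered pairs of distinct edges `uv`, `vw` of `G`
sharing the common vertex `v` (i.e. with `u ≠ w`); here it is written as one half of the
corresponding sum over ordered pairs `(u, w)` of distinct neighbours of each vertex `v`. -/
theorem harmonicIndex_totalGraph {V : Type*} [Fintype V] (G : SimpleGraph V) :
    G.totalGraph.harmonicIndex =
      (1 / 2) * G.harmonicIndex
      + (1 / 2) * ∑ v : V, ∑ u ∈ G.neighborFinset v, ∑ w ∈ G.neighborFinset v,
          (if u ≠ w then
            2 / ((G.degree u : ℝ) + 2 * (G.degree v : ℝ) + (G.degree w : ℝ)) else 0)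
      + 8 * ∑ e ∈ G.edgeFinset,
          Sym2.lift ⟨fun u v =>
              ((G.degree u : ℝ) + (G.degree v : ℝ)) /
                (3 * ((G.degree u : ℝ) + (G.degree v : ℝ)) ^ 2
                  + 4 * (G.degree u : ℝ) * (G.degree v : ℝ)),
            fun u v => by ring_nf⟩ e := by
  classical
  have key : (∑ x : V ⊕ G.edgeSet, ∑ y ∈ G.totalGraph.neighborFinset x,
      2 / ((G.totalGraph.degree x : ℝ) + (G.totalGraph.degree y : ℝ)))
      = 2 * G.totalGraph.harmonicIndex := by
    rw [SimpleGraph.harmonicIndex]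
    exact TGAux.sum_neighbors_eq_two_mul_edge_sum G.totalGraph
      (fun x y => 2 / ((G.totalGraph.degree x : ℝ) + (G.totalGraph.degree y : ℝ)))
      (fun x y => by simp [add_comm])
  have split : (∑ x : V ⊕ G.edgeSet, ∑ y ∈ G.totalGraph.neighborFinset x,
      2 / ((G.totalGraph.degree x : ℝ) + (G.totalGraph.degree y : ℝ)))
      = ((∑ u : V, ∑ v : V, if G.Adj u v then
            2 / (2 * (G.degree u : ℝ) + 2 * (G.degree v : ℝ)) else 0)
        + (∑ u : V, ∑ e : G.edgeSet, if u ∈ (e : Sym2 V) then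
            2 / (2 * (G.degree u : ℝ) + TGAux.edgeDeg G (e : Sym2 V)) else 0))
        + ((∑ e : G.edgeSet, ∑ u : V, if u ∈ (e : Sym2 V) then
            2 / (TGAux.edgeDeg G (e : Sym2 V) + 2 * (G.degree u : ℝ)) else 0)
        + (∑ e : G.edgeSet, ∑ f : G.edgeSet,
            if e ≠ f ∧ ∃ v, v ∈ (e : Sym2 V) ∧ v ∈ (f : Sym2 V) then
            2 / (TGAux.edgeDeg G (e : Sym2 V) + TGAux.edgeDeg G (f : Sym2 V)) else 0)) := by
    simp_rw [SimpleGraph.neighborFinset_eq_filter, Finset.sum_filter, Fintype.sum_sum_type,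
      TGAux.totalGraph_adj_inl_inl, TGAux.totalGraph_adj_inl_inr, TGAux.totalGraph_adj_inr_inl,
      TGAux.totalGraph_adj_inr_inr, TGAux.degree_totalGraph_inl, TGAux.degree_totalGraph_inr]
    rw [Finset.sum_add_distrib, Finset.sum_add_distrib]
  have hA : (∑ u : V, ∑ v : V, if G.Adj u v then
      2 / (2 * (G.degree u : ℝ) + 2 * (G.degree v : ℝ)) else 0) = G.harmonicIndex := by
    simp_rw [← Finset.sum_filter, ← SimpleGraph.neighborFinset_eq_filter]
    have hpt : ∀ u v : V, 2 / (2 * (G.degree u : ℝ) + 2 * (G.degree v : ℝ))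
        = (1 / 2) * (2 / ((G.degree u : ℝ) + (G.degree v : ℝ))) := by
      intro u v
      rw [show 2 * (G.degree u : ℝ) + 2 * (G.degree v : ℝ)
        = ((G.degree u : ℝ) + (G.degree v : ℝ)) * 2 by ring, div_mul_eq_div_div]
      ring
    simp_rw [hpt, ← Finset.mul_sum]
    rw [TGAux.sum_neighbors_eq_two_mul_edge_sum G
      (fun u v => 2 / ((G.degree u : ℝ) + (G.degree v : ℝ)))
      (fun u v => by simp [add_comm])]
    rw [SimpleGraph.harmonicIndex]
    ring
  have hBC : (∑ u : V, ∑ e : G.edgeSet, if u ∈ (e : Sym2 V) then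
        2 / (2 * (G.degree u : ℝ) + TGAux.edgeDeg G (e : Sym2 V)) else 0)
      + (∑ e : G.edgeSet, ∑ u : V, if u ∈ (e : Sym2 V) then
        2 / (TGAux.edgeDeg G (e : Sym2 V) + 2 * (G.degree u : ℝ)) else 0)
      = 16 * ∑ e ∈ G.edgeFinset,
          Sym2.lift ⟨fun u v =>
              ((G.degree u : ℝ) + (G.degree v : ℝ)) /
                (3 * ((G.degree u : ℝ) + (G.degree v : ℝ)) ^ 2
                  + 4 * (G.degree u : ℝ) * (G.degree v : ℝ)),
            fun u v => by ring_nf⟩ e := by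
    have hcomm : (∑ e : G.edgeSet, ∑ u : V, if u ∈ (e : Sym2 V) then
        2 / (TGAux.edgeDeg G (e : Sym2 V) + 2 * (G.degree u : ℝ)) else 0)
        = ∑ u : V, ∑ e : G.edgeSet, if u ∈ (e : Sym2 V) then
        2 / (TGAux.edgeDeg G (e : Sym2 V) + 2 * (G.degree u : ℝ)) else 0 :=
      Finset.sum_comm
    rw [hcomm]
    have h1 : ∀ u : V, (∑ e : G.edgeSet, if u ∈ (e : Sym2 V) then
        2 / (2 * (G.degree u : ℝ) + TGAux.edgeDeg G (e : Sym2 V)) else 0)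
        = ∑ v ∈ G.neighborFinset u, 2 / (2 * (G.degree u : ℝ) + TGAux.edgeDeg G s(u, v)) :=
      fun u => TGAux.sum_edges_through G u
        (fun z => 2 / (2 * (G.degree u : ℝ) + TGAux.edgeDeg G z))
    have h2 : ∀ u : V, (∑ e : G.edgeSet, if u ∈ (e : Sym2 V) then
        2 / (TGAux.edgeDeg G (e : Sym2 V) + 2 * (G.degree u : ℝ)) else 0)
        = ∑ v ∈ G.neighborFinset u, 2 / (TGAux.edgeDeg G s(u, v) + 2 * (G.degree u : ℝ)) :=
      fun u => TGAux.sum_edges_through G u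
        (fun z => 2 / (TGAux.edgeDeg G z + 2 * (G.degree u : ℝ)))
    simp_rw [h1, h2, TGAux.edgeDeg_mk, ← Finset.sum_add_distrib]
    -- now: S = ∑ u, ∑ v ∈ N u, g u v  with
    -- g u v = 2/(2 Du + (Du+Dv)) + 2/((Du+Dv) + 2 Du)
    have hswap := TGAux.sum_neighbors_swap G (fun u v =>
      2 / (2 * (G.degree u : ℝ) + ((G.degree u : ℝ) + (G.degree v : ℝ)))
      + 2 / (((G.degree u : ℝ) + (G.degree v : ℝ)) + 2 * (G.degree u : ℝ)))
    have hEsum := TGAux.sum_neighbors_eq_two_mul_edge_sum G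
      (fun u v => ((G.degree u : ℝ) + (G.degree v : ℝ)) /
                (3 * ((G.degree u : ℝ) + (G.degree v : ℝ)) ^ 2
                  + 4 * (G.degree u : ℝ) * (G.degree v : ℝ)))
      (fun u v => by ring_nf)
    have h2S : (∑ u : V, ∑ v ∈ G.neighborFinset u,
        (2 / (2 * (G.degree u : ℝ) + ((G.degree u : ℝ) + (G.degree v : ℝ)))
          + 2 / (((G.degree u : ℝ) + (G.degree v : ℝ)) + 2 * (G.degree u : ℝ))))
        + (∑ u : V, ∑ v ∈ G.neighborFinset u,
        (2 / (2 * (G.degree u : ℝ) + ((G.degree u : ℝ) + (G.degree v : ℝ)))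
          + 2 / (((G.degree u : ℝ) + (G.degree v : ℝ)) + 2 * (G.degree u : ℝ))))
        = 16 * ∑ u : V, ∑ v ∈ G.neighborFinset u,
            ((G.degree u : ℝ) + (G.degree v : ℝ)) /
                (3 * ((G.degree u : ℝ) + (G.degree v : ℝ)) ^ 2
                  + 4 * (G.degree u : ℝ) * (G.degree v : ℝ)) := by
      nth_rewrite 2 [hswap]
      rw [← Finset.sum_add_distrib]
      simp_rw [← Finset.sum_add_distrib]
      rw [Finset.mul_sum]
      refine Finset.sum_congr rfl fun u _ => ?_
      rw [Finset.mul_sum]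
      refine Finset.sum_congr rfl fun v hv => ?_
      have hadj : G.Adj u v := (G.mem_neighborFinset u v).mp hv
      have ha : (0 : ℝ) < (G.degree u : ℝ) := by
        have : 0 < G.degree u := G.degree_pos_iff_exists_adj u |>.mpr ⟨v, hadj⟩
        exact_mod_cast this
      have hb : (0 : ℝ) < (G.degree v : ℝ) := by
        have : 0 < G.degree v := G.degree_pos_iff_exists_adj v |>.mpr ⟨u, hadj.symm⟩
        exact_mod_cast this
      set a := (G.degree u : ℝ)
      set b := (G.degree v : ℝ)
      have d1 : 2 * a + (a + b) ≠ 0 := by positivity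
      have d2 : (a + b) + 2 * a ≠ 0 := by positivity
      have d3 : 2 * b + (b + a) ≠ 0 := by positivity
      have d4 : (b + a) + 2 * b ≠ 0 := by positivity
      have d5 : 3 * (a + b) ^ 2 + 4 * a * b ≠ 0 := by positivity
      field_simp
      ring
    linarith [hEsum, h2S]
  have hD : (∑ e : G.edgeSet, ∑ f : G.edgeSet,
      if e ≠ f ∧ ∃ v, v ∈ (e : Sym2 V) ∧ v ∈ (f : Sym2 V) then
        2 / (TGAux.edgeDeg G (e : Sym2 V) + TGAux.edgeDeg G (f : Sym2 V)) else 0)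
      = ∑ v : V, ∑ u ∈ G.neighborFinset v, ∑ w ∈ G.neighborFinset v,
          (if u ≠ w then
            2 / ((G.degree u : ℝ) + 2 * (G.degree v : ℝ) + (G.degree w : ℝ)) else 0) := by
    simp_rw [TGAux.ite_shared]
    calc (∑ e : G.edgeSet, ∑ f : G.edgeSet, ∑ v : V,
          if e ≠ f ∧ v ∈ (e : Sym2 V) ∧ v ∈ (f : Sym2 V) then
            2 / (TGAux.edgeDeg G (e : Sym2 V) + TGAux.edgeDeg G (f : Sym2 V)) else 0)
        = ∑ e : G.edgeSet, ∑ v : V, ∑ f : G.edgeSet,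
          if e ≠ f ∧ v ∈ (e : Sym2 V) ∧ v ∈ (f : Sym2 V) then
            2 / (TGAux.edgeDeg G (e : Sym2 V) + TGAux.edgeDeg G (f : Sym2 V)) else 0 :=
          Finset.sum_congr rfl fun e _ => Finset.sum_comm
      _ = ∑ v : V, ∑ e : G.edgeSet, ∑ f : G.edgeSet,
          if e ≠ f ∧ v ∈ (e : Sym2 V) ∧ v ∈ (f : Sym2 V) then
            2 / (TGAux.edgeDeg G (e : Sym2 V) + TGAux.edgeDeg G (f : Sym2 V)) else 0 :=
          Finset.sum_comm
      _ = _ := ?_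
    refine Finset.sum_congr rfl fun v _ => ?_
    have hnest : ∀ e f : G.edgeSet,
        (if e ≠ f ∧ v ∈ (e : Sym2 V) ∧ v ∈ (f : Sym2 V) then
          2 / (TGAux.edgeDeg G (e : Sym2 V) + TGAux.edgeDeg G (f : Sym2 V)) else 0)
        = if v ∈ (f : Sym2 V) then (if v ∈ (e : Sym2 V) then
            (if (e : Sym2 V) ≠ (f : Sym2 V) then
              2 / (TGAux.edgeDeg G (e : Sym2 V) + TGAux.edgeDeg G (f : Sym2 V)) else 0)
            else 0) else 0 := by
      intro e f
      by_cases h1 : v ∈ (f : Sym2 V) <;> by_cases h2 : v ∈ (e : Sym2 V) <;>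
        by_cases h3 : (e : Sym2 V) = (f : Sym2 V) <;>
        simp [h1, h2, h3, ne_eq, Subtype.ext_iff]
    simp_rw [hnest]
    have hf : ∀ e : G.edgeSet,
        (∑ f : G.edgeSet, if v ∈ (f : Sym2 V) then (if v ∈ (e : Sym2 V) then
            (if (e : Sym2 V) ≠ (f : Sym2 V) then
              2 / (TGAux.edgeDeg G (e : Sym2 V) + TGAux.edgeDeg G (f : Sym2 V)) else 0)
            else 0) else 0)
        = ∑ w ∈ G.neighborFinset v, (if v ∈ (e : Sym2 V) then
            (if (e : Sym2 V) ≠ s(v, w) then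
              2 / (TGAux.edgeDeg G (e : Sym2 V) + TGAux.edgeDeg G s(v, w)) else 0)
            else 0) :=
      fun e => TGAux.sum_edges_through G v (fun z => if v ∈ (e : Sym2 V) then
        (if (e : Sym2 V) ≠ z then
          2 / (TGAux.edgeDeg G (e : Sym2 V) + TGAux.edgeDeg G z) else 0) else 0)
    simp_rw [hf]
    have hpull : ∀ e : G.edgeSet,
        (∑ w ∈ G.neighborFinset v, (if v ∈ (e : Sym2 V) then
            (if (e : Sym2 V) ≠ s(v, w) then
              2 / (TGAux.edgeDeg G (e : Sym2 V) + TGAux.edgeDeg G s(v, w)) else 0)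
            else 0))
        = if v ∈ (e : Sym2 V) then (∑ w ∈ G.neighborFinset v,
            (if (e : Sym2 V) ≠ s(v, w) then
              2 / (TGAux.edgeDeg G (e : Sym2 V) + TGAux.edgeDeg G s(v, w)) else 0)) else 0 := by
      intro e; split_ifs <;> simp
    simp_rw [hpull]
    rw [TGAux.sum_edges_through G v (fun z => ∑ w ∈ G.neighborFinset v,
      (if z ≠ s(v, w) then 2 / (TGAux.edgeDeg G z + TGAux.edgeDeg G s(v, w)) else 0))]
    refine Finset.sum_congr rfl fun u hu => Finset.sum_congr rfl fun w hw => ?_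
    by_cases huw : u = w
    · subst huw
      rw [if_neg (by simp), if_neg (by simp)]
    · rw [if_pos (fun hc => huw (Sym2.congr_right.mp hc)), if_pos huw,
        TGAux.edgeDeg_mk, TGAux.edgeDeg_mk]
      congr 1
      push_cast
      ring
  rw [split] at key
  rw [hA] at key
  linarith [key, hBC, hD]
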